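/- In a tuple-independent probabilistic database, for indices i < j with p_i > 0, the ratio ρ_{j,i}(α) = Υ_α(t_j)/Υ_α(t_i) satisfies ρ_{j,i}(α) = (p_j/p_i)·∏_{l=i}^{j−1} (1 − p_l + p_l·α) for every α ∈ (0,1], and α ↦ ρ_{j,i}(α) is a nondecreasing function of α on (0,1] (likewise, for i > j the ratio is nonincreasing in α). -/

import Mathlib

section PRFeAux

/-- Summing over all worlds containing `i`: the key factorization identity. -/
lemma prfe_sum_world {n : ℕ} (a b : Fin n → ℝ) (i : Fin n) :
    ∑ W ∈ Finset.univ.filter (fun W : Finset (Fin n) => i ∈ W),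
      (∏ l ∈ W, a l) * ∏ l ∈ Wᶜ, b l
    = a i * ∏ l ∈ Finset.univ.erase i, (a l + b l) := by
  classical
  set b' : Fin n → ℝ := Function.update b i 0 with hb'
  have key : ∑ W : Finset (Fin n), (∏ l ∈ W, a l) * ∏ l ∈ Wᶜ, b' l
      = ∏ l : Fin n, (a l + b' l) := by
    rw [Finset.prod_add, Finset.powerset_univ]
    refine Finset.sum_congr rfl fun W _ => ?_
    rw [Finset.compl_eq_univ_sdiff]
  have split := Finset.sum_filter_add_sum_filter_not Finset.univ
    (fun W : Finset (Fin n) => i ∈ W)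
    (fun W => (∏ l ∈ W, a l) * ∏ l ∈ Wᶜ, b' l)
  have hzero : ∑ W ∈ Finset.univ.filter (fun W : Finset (Fin n) => ¬ i ∈ W),
      (∏ l ∈ W, a l) * ∏ l ∈ Wᶜ, b' l = 0 := by
    refine Finset.sum_eq_zero fun W hW => ?_
    simp only [Finset.mem_filter] at hW
    have : i ∈ Wᶜ := Finset.mem_compl.2 hW.2
    rw [Finset.prod_eq_zero this (by simp [hb'])]
    ring
  have hsame : ∑ W ∈ Finset.univ.filter (fun W : Finset (Fin n) => i ∈ W),
      (∏ l ∈ W, a l) * ∏ l ∈ Wᶜ, b' l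
      = ∑ W ∈ Finset.univ.filter (fun W : Finset (Fin n) => i ∈ W),
      (∏ l ∈ W, a l) * ∏ l ∈ Wᶜ, b l := by
    refine Finset.sum_congr rfl fun W hW => ?_
    simp only [Finset.mem_filter] at hW
    congr 1
    refine Finset.prod_congr rfl fun l hl => ?_
    have : l ≠ i := by
      intro h; subst h; exact (Finset.mem_compl.1 hl) hW.2
    simp [hb', Function.update_of_ne this]
  have hprod : ∏ l : Fin n, (a l + b' l)
      = a i * ∏ l ∈ Finset.univ.erase i, (a l + b l) := by
    rw [← Finset.mul_prod_erase Finset.univ _ (Finset.mem_univ i)]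
    simp only [hb', Function.update_self, add_zero]
    congr 1
    refine Finset.prod_congr rfl fun l hl => ?_
    rw [Function.update_of_ne (Finset.ne_of_mem_erase hl)]
  rw [hsame] at split
  rw [← hprod, ← key, ← split, hzero, add_zero]

end PRFeAux

/-- The probability of the possible world `W` in a tuple-independent probabilistic
database whose tuple `t_l` exists independently with probability `p l`. -/
noncomputable def worldProb (n : ℕ) (p : Fin n → ℝ) (W : Finset (Fin n)) : ℝ :=
  (∏ l ∈ W, p l) * ∏ l ∈ Wᶜ, (1 - p l)

/-- The positional probability `Pr(r(t_i) = j)`: the total probability of possible worlds `W`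
with `i ∈ W` in which exactly `j - 1` tuples with higher score (i.e. smaller index) than `t_i`
are present, where the tuples `t_1, …, t_n` are listed in strictly decreasing score order. -/
noncomputable def posProb (n : ℕ) (p : Fin n → ℝ) (i : Fin n) (j : ℕ) : ℝ :=
  ∑ W ∈ Finset.univ.filter (fun W : Finset (Fin n) =>
      i ∈ W ∧ (W.filter (fun l => l < i)).card + 1 = j), worldProb n p W

/-- The `PRF^e` value of tuple `t_i`: `Υ_α(t_i) = Σ_{j=1}^n α^j · Pr(r(t_i) = j)`. -/
noncomputable def prfe (n : ℕ) (p : Fin n → ℝ) (i : Fin n) (α : ℝ) : ℝ :=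
  ∑ j ∈ Finset.Icc 1 n, α ^ j * posProb n p i j

/-- Closed form for the `PRF^e` value: `Υ_α(t_i) = α · p_i · ∏_{l<i} (1 − p_l + p_l·α)`. -/
lemma prfe_closed (n : ℕ) (p : Fin n → ℝ) (i : Fin n) (α : ℝ) :
    prfe n p i α = α * (p i * ∏ l ∈ Finset.Iio i, (1 - p l + p l * α)) := by
  classical
  set a : Fin n → ℝ := fun l => p l * (if l < i then α else 1) with ha
  set b : Fin n → ℝ := fun l => 1 - p l with hb
  have step1 : prfe n p i α
      = ∑ W ∈ Finset.univ.filter (fun W : Finset (Fin n) => i ∈ W),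
          α ^ ((W.filter (fun l => l < i)).card + 1) * worldProb n p W := by
    unfold prfe posProb
    have hmap : ∀ W ∈ Finset.univ.filter (fun W : Finset (Fin n) => i ∈ W),
        (W.filter (fun l => l < i)).card + 1 ∈ Finset.Icc 1 n := by
      intro W _
      simp only [Finset.mem_Icc]
      constructor
      · omega
      · have hsub : W.filter (fun l => l < i) ⊆ Finset.univ.erase i := by
          intro l hl
          simp only [Finset.mem_filter] at hl
          exact Finset.mem_erase.2 ⟨ne_of_lt hl.2, Finset.mem_univ l⟩
        have := Finset.card_le_card hsub
        rw [Finset.card_erase_of_mem (Finset.mem_univ i), Finset.card_univ,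
          Fintype.card_fin] at this
        have hn : 0 < n := i.pos
        omega
    rw [← Finset.sum_fiberwise_of_maps_to hmap
      (fun W => α ^ ((W.filter (fun l => l < i)).card + 1) * worldProb n p W)]
    refine Finset.sum_congr rfl fun j _ => ?_
    rw [Finset.mul_sum, Finset.filter_filter]
    refine Finset.sum_congr rfl fun W hW => ?_
    simp only [Finset.mem_filter] at hW
    rw [hW.2.2]
  have step2 : ∀ W : Finset (Fin n),
      α ^ ((W.filter (fun l => l < i)).card + 1) * worldProb n p W
      = α * ((∏ l ∈ W, a l) * ∏ l ∈ Wᶜ, b l) := by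
    intro W
    unfold worldProb
    have : ∏ l ∈ W, a l = (∏ l ∈ W, p l) * α ^ (W.filter (fun l => l < i)).card := by
      rw [ha]
      rw [Finset.prod_mul_distrib]
      congr 1
      rw [← Finset.prod_filter, Finset.prod_const]
    rw [this, hb]
    ring
  rw [step1, Finset.sum_congr rfl (fun W _ => step2 W), ← Finset.mul_sum,
    prfe_sum_world a b i]
  have hai : a i = p i := by simp [ha]
  have hprod : ∏ l ∈ Finset.univ.erase i, (a l + b l)
      = ∏ l ∈ Finset.Iio i, (1 - p l + p l * α) := by
    have h1 : ∀ l, a l + b l = if l < i then (1 - p l + p l * α) else 1 := by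
      intro l
      simp only [ha, hb]
      split_ifs <;> ring
    calc ∏ l ∈ Finset.univ.erase i, (a l + b l)
        = ∏ l ∈ Finset.univ.erase i, (if l < i then (1 - p l + p l * α) else 1) :=
          Finset.prod_congr rfl fun l _ => h1 l
      _ = ∏ l ∈ (Finset.univ.erase i).filter (fun l => l < i), (1 - p l + p l * α) :=
          (Finset.prod_filter _ _).symm
      _ = ∏ l ∈ Finset.Iio i, (1 - p l + p l * α) := by
          congr 1
          ext l
          simp only [Finset.mem_filter, Finset.mem_erase, Finset.mem_univ, true_and,
            Finset.mem_Iio]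
          constructor
          · exact fun h => h.2
          · exact fun h => ⟨⟨ne_of_lt h, trivial⟩, h⟩
  rw [hai, hprod]

lemma factor_pos {n : ℕ} (p : Fin n → ℝ) (hp : ∀ l, 0 ≤ p l ∧ p l ≤ 1)
    {α : ℝ} (hα : α ∈ Set.Ioc (0 : ℝ) 1) (l : Fin n) : 0 < 1 - p l + p l * α := by
  obtain ⟨h0, h1⟩ := hp l
  obtain ⟨hα0, hα1⟩ := hα
  nlinarith

lemma prod_factor_pos {n : ℕ} (p : Fin n → ℝ) (hp : ∀ l, 0 ≤ p l ∧ p l ≤ 1)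
    {α : ℝ} (hα : α ∈ Set.Ioc (0 : ℝ) 1) (s : Finset (Fin n)) :
    0 < ∏ l ∈ s, (1 - p l + p l * α) :=
  Finset.prod_pos fun l _ => factor_pos p hp hα l

lemma Iio_split {n : ℕ} {i j : Fin n} (hij : i ≤ j) (f : Fin n → ℝ) :
    ∏ l ∈ Finset.Iio j, f l = (∏ l ∈ Finset.Iio i, f l) * ∏ l ∈ Finset.Ico i j, f l := by
  rw [← Finset.prod_union]
  · congr 1
    ext l
    simp only [Finset.mem_union, Finset.mem_Iio, Finset.mem_Ico, Fin.lt_def, Fin.le_def]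
    have := Fin.le_def.1 hij
    omega
  · rw [Finset.disjoint_left]
    intro l hl hl'
    simp only [Finset.mem_Iio, Fin.lt_def] at hl
    simp only [Finset.mem_Ico, Fin.lt_def, Fin.le_def] at hl'
    omega

/-- Ratio formula for `i < j`. -/
lemma prfe_ratio {n : ℕ} (p : Fin n → ℝ) (hp : ∀ l, 0 ≤ p l ∧ p l ≤ 1)
    {i j : Fin n} (hij : i < j) (hpi : 0 < p i) {α : ℝ} (hα : α ∈ Set.Ioc (0 : ℝ) 1) :
    prfe n p j α / prfe n p i α = p j / p i * ∏ l ∈ Finset.Ico i j, (1 - p l + p l * α) := by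
  have hA := prod_factor_pos p hp hα (Finset.Iio i)
  rw [prfe_closed, prfe_closed, Iio_split (le_of_lt hij)]
  have hα0 : α ≠ 0 := ne_of_gt hα.1
  generalize ∏ l ∈ Finset.Iio i, (1 - p l + p l * α) = A at hA ⊢
  generalize ∏ l ∈ Finset.Ico i j, (1 - p l + p l * α) = B
  field_simp

/-- Inverse ratio formula for `j < i`. -/
lemma prfe_ratio_inv {n : ℕ} (p : Fin n → ℝ) (hp : ∀ l, 0 ≤ p l ∧ p l ≤ 1)
    {i j : Fin n} (hji : j < i) (hpi : 0 < p i) {α : ℝ} (hα : α ∈ Set.Ioc (0 : ℝ) 1) :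
    prfe n p j α / prfe n p i α
      = p j / (p i * ∏ l ∈ Finset.Ico j i, (1 - p l + p l * α)) := by
  have hA := prod_factor_pos p hp hα (Finset.Iio j)
  have hB := prod_factor_pos p hp hα (Finset.Ico j i)
  rw [prfe_closed, prfe_closed, Iio_split (le_of_lt hji)]
  have hα0 : α ≠ 0 := ne_of_gt hα.1
  generalize ∏ l ∈ Finset.Iio j, (1 - p l + p l * α) = A at hA ⊢
  generalize ∏ l ∈ Finset.Ico j i, (1 - p l + p l * α) = B at hB ⊢
  field_simp

/-- In a tuple-independent probabilistic database, for indices `i < j` with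
`p i > 0`, the ratio `ρ_{j,i}(α) = Υ_α(t_j) / Υ_α(t_i)` satisfies
`ρ_{j,i}(α) = (p j / p i) · ∏_{l=i}^{j-1} (1 − p l + p l · α)` for every `α ∈ (0,1]`, and
`α ↦ ρ_{j,i}(α)` is nondecreasing on `(0,1]`; likewise, for `i > j` the ratio is
nonincreasing in `α` on `(0,1]`. -/
theorem prfe_ratio_formula_and_monotone
    (n : ℕ) (p : Fin n → ℝ) (hp : ∀ l, 0 ≤ p l ∧ p l ≤ 1)
    (i j : Fin n) (hij : i < j) (hpi : 0 < p i) :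
    (∀ α ∈ Set.Ioc (0 : ℝ) 1,
        prfe n p j α / prfe n p i α =
          p j / p i * ∏ l ∈ Finset.Ico i j, (1 - p l + p l * α))
    ∧ MonotoneOn (fun α => prfe n p j α / prfe n p i α) (Set.Ioc (0 : ℝ) 1)
    ∧ (∀ i' j' : Fin n, j' < i' → 0 < p i' →
        AntitoneOn (fun α => prfe n p j' α / prfe n p i' α) (Set.Ioc (0 : ℝ) 1)) := by
  refine ⟨fun α hα => prfe_ratio p hp hij hpi hα, ?_, ?_⟩
  · intro x hx y hy hxy
    simp only
    rw [prfe_ratio p hp hij hpi hx, prfe_ratio p hp hij hpi hy]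
    have hc : 0 ≤ p j / p i := div_nonneg (hp j).1 (le_of_lt hpi)
    refine mul_le_mul_of_nonneg_left ?_ hc
    refine Finset.prod_le_prod (fun l _ => le_of_lt (factor_pos p hp hx l)) ?_
    intro l _
    have := mul_le_mul_of_nonneg_left hxy (hp l).1
    linarith
  · intro i' j' hji' hpi' x hx y hy hxy
    simp only
    rw [prfe_ratio_inv p hp hji' hpi' hx, prfe_ratio_inv p hp hji' hpi' hy]
    have hBx := prod_factor_pos p hp hx (Finset.Ico j' i')
    have hBy := prod_factor_pos p hp hy (Finset.Ico j' i')
    have hBle : ∏ l ∈ Finset.Ico j' i', (1 - p l + p l * x)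
        ≤ ∏ l ∈ Finset.Ico j' i', (1 - p l + p l * y) := by
      refine Finset.prod_le_prod (fun l _ => le_of_lt (factor_pos p hp hx l)) ?_
      intro l _
      have := mul_le_mul_of_nonneg_left hxy (hp l).1
      linarith
    gcongr
    exact (hp j').1
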